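/- For partitioned permutations, the length |(V,π)| = 2|V| − |π| satisfies the triangle inequality: given partitioned permutations (V,π) and (U,σ) on {1,…,n} (with π ≤ V and σ ≤ U), one has |(V∨U, πσ)| ≤ |(V,π)| + |(U,σ)|. -/
import Mathlib

/-- The setoid on `α` whose classes are the cycles of the permutation `π`. -/
def cycleSetoid {α : Type*} (π : Equiv.Perm α) : Setoid α :=
  ⟨π.SameCycle, ⟨fun x => Equiv.Perm.SameCycle.refl π x,
    fun h => h.symm, fun h1 h2 => h1.trans h2⟩⟩

/-- The number of cycles (including fixed points) of a permutation. -/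
noncomputable def numCycles {α : Type*} (π : Equiv.Perm α) : ℕ :=
  Nat.card (Quotient (cycleSetoid π))

/-- The length `|V| = n - #(V)` of a set partition, as an integer. -/
noncomputable def setoidLen {α : Type*} (s : Setoid α) : ℤ :=
  (Nat.card α : ℤ) - (Nat.card (Quotient s) : ℤ)

/-- The length `|π| = n - #(π)` of a permutation, as an integer. -/
noncomputable def permLenZ {α : Type*} (π : Equiv.Perm α) : ℤ :=
  (Nat.card α : ℤ) - (numCycles π : ℤ)

section Aux

open Equiv Equiv.Perm

variable {α : Type*}

instance PPaux.finiteOption {β : Type*} [Finite β] : Finite (Option β) :=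
  Finite.of_equiv (β ⊕ (PUnit : Type)) (Equiv.optionEquivSumPUnit β).symm

lemma PPaux.sameCycle_of_pow [Finite α] {f : Equiv.Perm α} {x y : α} (h : f.SameCycle x y) :
    ∃ i : ℕ, (f ^ i) x = y := by
  obtain ⟨i, _, h⟩ := h.exists_pow_eq'
  exact ⟨i, h⟩

lemma PPaux.cycleSetoid_rel {f : Equiv.Perm α} {x y : α} :
    (cycleSetoid f) x y ↔ f.SameCycle x y := Iff.rfl

lemma PPaux.sameCycle_swap_self [DecidableEq α] (a b : α) : (Equiv.swap a b).SameCycle a b :=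
  ⟨1, by simp⟩

lemma PPaux.sameCycle_swap_cases [Finite α] [DecidableEq α] {a b x y : α}
    (h : (Equiv.swap a b).SameCycle x y) :
    x = y ∨ (x = a ∧ y = b) ∨ (x = b ∧ y = a) := by
  obtain ⟨i, hi⟩ := PPaux.sameCycle_of_pow h
  rcases Nat.even_or_odd i with ⟨k, hk⟩ | ⟨k, hk⟩
  · left
    subst hk
    rw [← two_mul, pow_mul, sq, Equiv.swap_mul_self, one_pow] at hi
    exact hi
  · subst hk
    rw [pow_add, pow_mul, sq, Equiv.swap_mul_self, one_pow, one_mul, pow_one] at hi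
    rcases eq_or_ne x a with rfl | hxa
    · right; left; exact ⟨rfl, by rw [← hi, Equiv.swap_apply_left]⟩
    rcases eq_or_ne x b with rfl | hxb
    · right; right; exact ⟨rfl, by rw [← hi, Equiv.swap_apply_right]⟩
    · left; rw [← hi, Equiv.swap_apply_of_ne_of_ne hxa hxb]

/-- The natural map between quotients by comparable setoids. -/
def PPaux.quotMap {s t : Setoid α} (h : s ≤ t) : Quotient s → Quotient t :=
  Quotient.lift (fun a => Quotient.mk t a) (fun _ _ hab => Quotient.sound (h hab))

lemma PPaux.quotMap_surj {s t : Setoid α} (h : s ≤ t) : Function.Surjective (PPaux.quotMap h) :=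
  fun q => Quotient.inductionOn q (fun a => ⟨Quotient.mk s a, rfl⟩)

lemma PPaux.card_mono [Finite α] {s t : Setoid α} (h : s ≤ t) :
    Nat.card (Quotient t) ≤ Nat.card (Quotient s) :=
  Nat.card_le_card_of_surjective _ (PPaux.quotMap_surj h)

/-- The setoid obtained from `s` by merging the classes of `a` and `b`. -/
def PPaux.extendPair (s : Setoid α) (a b : α) : Setoid α where
  r x y := s x y ∨ (s x a ∧ s b y) ∨ (s x b ∧ s a y)
  iseqv := by
    refine ⟨fun x => Or.inl (s.refl' x), ?_, ?_⟩
    · rintro x y (h | ⟨h1, h2⟩ | ⟨h1, h2⟩)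
      · exact Or.inl (s.symm' h)
      · exact Or.inr (Or.inr ⟨s.symm' h2, s.symm' h1⟩)
      · exact Or.inr (Or.inl ⟨s.symm' h2, s.symm' h1⟩)
    · rintro x y z (hxy | ⟨h1, h2⟩ | ⟨h1, h2⟩) (hyz | ⟨g1, g2⟩ | ⟨g1, g2⟩)
      · exact Or.inl (s.trans' hxy hyz)
      · exact Or.inr (Or.inl ⟨s.trans' hxy g1, g2⟩)
      · exact Or.inr (Or.inr ⟨s.trans' hxy g1, g2⟩)
      · exact Or.inr (Or.inl ⟨h1, s.trans' h2 hyz⟩)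
      · exact Or.inl (s.trans' h1 (s.trans' (s.symm' (s.trans' h2 g1)) g2))
      · exact Or.inl (s.trans' h1 g2)
      · exact Or.inr (Or.inr ⟨h1, s.trans' h2 hyz⟩)
      · exact Or.inl (s.trans' h1 g2)
      · exact Or.inl (s.trans' h1 (s.trans' (s.symm' (s.trans' h2 g1)) g2))

lemma PPaux.extendPair_rel {s : Setoid α} {a b x y : α} :
    (PPaux.extendPair s a b) x y ↔ s x y ∨ (s x a ∧ s b y) ∨ (s x b ∧ s a y) := Iff.rfl

lemma PPaux.sup_swap_le_extendPair [Finite α] [DecidableEq α] (s : Setoid α) (a b : α) :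
    s ⊔ cycleSetoid (Equiv.swap a b) ≤ PPaux.extendPair s a b := by
  apply sup_le
  · intro x y h
    exact Or.inl h
  · intro x y h
    rcases PPaux.sameCycle_swap_cases h with rfl | ⟨rfl, rfl⟩ | ⟨rfl, rfl⟩
    · exact Or.inl (s.refl' x)
    · exact Or.inr (Or.inl ⟨s.refl' _, s.refl' _⟩)
    · exact Or.inr (Or.inr ⟨s.refl' _, s.refl' _⟩)

/-- Joining one pair decreases the number of classes by at most one. -/
lemma PPaux.card_le_card_sup_swap_add_one [Finite α] [DecidableEq α] (s : Setoid α) (a b : α) :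
    Nat.card (Quotient s) ≤
      Nat.card (Quotient (s ⊔ cycleSetoid (Equiv.swap a b))) + 1 := by
  classical
  set t := s ⊔ cycleSetoid (Equiv.swap a b) with ht
  have hle : s ≤ t := le_sup_left
  have hinj : Function.Injective
      (fun q : Quotient s =>
        if q = Quotient.mk s b then (none : Option (Quotient t))
        else some (PPaux.quotMap hle q)) := by
    intro q1 q2 h
    dsimp only at h
    by_cases h1 : q1 = Quotient.mk s b
    · by_cases h2 : q2 = Quotient.mk s b
      · exact h1.trans h2.symm
      · rw [if_pos h1, if_neg h2] at h
        exact absurd h (by simp)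
    · by_cases h2 : q2 = Quotient.mk s b
      · rw [if_neg h1, if_pos h2] at h
        exact absurd h (by simp)
      · rw [if_neg h1, if_neg h2] at h
        have h' : PPaux.quotMap hle q1 = PPaux.quotMap hle q2 := Option.some_injective _ h
        obtain ⟨x, rfl⟩ := q1.exists_rep
        obtain ⟨y, rfl⟩ := q2.exists_rep
        have hxy : t x y := Quotient.exact h'
        rcases PPaux.sup_swap_le_extendPair s a b hxy with hxy' | ⟨hx, hy⟩ | ⟨hx, hy⟩
        · exact Quotient.sound hxy'
        · exact absurd (Quotient.sound (s.symm' hy)) h2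
        · exact absurd (Quotient.sound hx) h1
  calc Nat.card (Quotient s) ≤ Nat.card (Option (Quotient t)) :=
        Nat.card_le_card_of_injective _ hinj
    _ = Nat.card (Quotient t) + 1 := Finite.card_option

/-- Joining a pair of inequivalent elements strictly decreases the number of classes. -/
lemma PPaux.card_sup_swap_lt [Finite α] [DecidableEq α] {s : Setoid α} {a b : α}
    (hab : ¬ s a b) :
    Nat.card (Quotient (s ⊔ cycleSetoid (Equiv.swap a b))) < Nat.card (Quotient s) := by
  set t := s ⊔ cycleSetoid (Equiv.swap a b) with ht
  have hle : s ≤ t := le_sup_left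
  have hsurj := PPaux.quotMap_surj hle
  refine lt_of_le_of_ne (PPaux.card_mono hle) ?_
  intro heq
  have hbij := hsurj.bijective_of_nat_card_le (le_of_eq heq.symm)
  have htab : t a b := le_sup_right (a := s) (PPaux.sameCycle_swap_self a b)
  have : PPaux.quotMap hle (Quotient.mk s a) = PPaux.quotMap hle (Quotient.mk s b) :=
    Quotient.sound htab
  exact hab (Quotient.exact (hbij.injective this))

/-- The cycles of a product refine the join of the cycles of the factors. -/
lemma PPaux.cycleSetoid_mul_le [Finite α] (f g : Equiv.Perm α) :
    cycleSetoid (f * g) ≤ cycleSetoid f ⊔ cycleSetoid g := by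
  intro x y h
  obtain ⟨k, hk⟩ := PPaux.sameCycle_of_pow h
  subst hk
  clear h
  induction k with
  | zero => exact (cycleSetoid f ⊔ cycleSetoid g).refl' x
  | succ n ih =>
    refine (cycleSetoid f ⊔ cycleSetoid g).trans' ih ?_
    set z := ((f * g) ^ n) x with hz
    have h1 : (cycleSetoid f ⊔ cycleSetoid g) z (g z) :=
      le_sup_right (a := cycleSetoid f) (⟨1, by simp⟩ : g.SameCycle z (g z))
    have h2 : (cycleSetoid f ⊔ cycleSetoid g) (g z) (f (g z)) :=
      le_sup_left (b := cycleSetoid g) (⟨1, by simp⟩ : f.SameCycle (g z) (f (g z)))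
    have h3 : ((f * g) ^ (n + 1)) x = f (g z) := by
      rw [pow_succ', Equiv.Perm.mul_apply, ← hz, Equiv.Perm.mul_apply]
    rw [h3]
    exact (cycleSetoid f ⊔ cycleSetoid g).trans' h1 h2

lemma PPaux.key_aux [Finite α] [DecidableEq α] {π : Equiv.Perm α} {a b : α}
    (hab : ¬ π.SameCycle a b) :
    ∀ k, 1 ≤ k → (∀ j, 1 ≤ j → j < k → (π ^ j) a ≠ a) →
      ((π * Equiv.swap a b) ^ k) b = (π ^ k) a := by
  intro k
  induction k with
  | zero => omega
  | succ n ih =>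
    intro _ hno
    rcases Nat.eq_zero_or_pos n with rfl | hn
    · simp [Equiv.Perm.mul_apply, Equiv.swap_apply_right]
    · have h1 : ((π * Equiv.swap a b) ^ n) b = (π ^ n) a :=
        ih hn (fun j hj1 hj2 => hno j hj1 (by omega))
      have hne_a : (π ^ n) a ≠ a := hno n hn (by omega)
      have hne_b : (π ^ n) a ≠ b := fun h => hab ⟨n, by simpa using h⟩
      rw [pow_succ', Equiv.Perm.mul_apply, h1, pow_succ', Equiv.Perm.mul_apply,
        Equiv.Perm.mul_apply, Equiv.swap_apply_of_ne_of_ne hne_a hne_b]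

lemma PPaux.key [Finite α] [DecidableEq α] {π : Equiv.Perm α} {a b : α}
    (hab : ¬ π.SameCycle a b) :
    ∀ z, π.SameCycle a z → (π * Equiv.swap a b).SameCycle b z := by
  classical
  have hex : ∃ k, 1 ≤ k ∧ (π ^ k) a = a :=
    ⟨orderOf π, orderOf_pos π, by rw [pow_orderOf_eq_one]; rfl⟩
  set m := Nat.find hex with hm
  obtain ⟨hm1, hm2⟩ := Nat.find_spec hex
  have hmin : ∀ j, 1 ≤ j → j < m → (π ^ j) a ≠ a :=
    fun j hj1 hj2 hja => Nat.find_min hex hj2 ⟨hj1, hja⟩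
  have hmb : ((π * Equiv.swap a b) ^ m) b = a := by
    rw [PPaux.key_aux hab m hm1 hmin]; exact hm2
  have H : ∀ i, ∀ z, (π ^ i) a = z → (π * Equiv.swap a b).SameCycle b z := by
    intro i
    induction i using Nat.strong_induction_on with
    | _ i ih =>
      intro z hz
      rcases Nat.eq_zero_or_pos i with rfl | hi1
      · exact ⟨m, by simpa [hz.symm] using hmb⟩
      rcases lt_or_ge i m with him | him
      · exact ⟨i, by rw [zpow_natCast, PPaux.key_aux hab i hi1
          (fun j hj1 hj2 => hmin j hj1 (by omega))]; exact hz⟩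
      · refine ih (i - m) (by omega) z ?_
        have h2 : (π ^ i) a = (π ^ (i - m)) a := by
          conv_lhs => rw [← Nat.sub_add_cancel him]
          rw [pow_add, Equiv.Perm.mul_apply, hm2]
        rw [← h2]; exact hz
  intro z hz
  obtain ⟨i, hi⟩ := PPaux.sameCycle_of_pow hz
  exact H i z hi

lemma PPaux.sup_le_cycle_mul_swap [Finite α] [DecidableEq α] {π : Equiv.Perm α} {a b : α}
    (hab : ¬ π.SameCycle a b) :
    cycleSetoid π ⊔ cycleSetoid (Equiv.swap a b) ≤ cycleSetoid (π * Equiv.swap a b) := by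
  apply sup_le
  · intro x y hxy
    by_cases hax : π.SameCycle a x
    · exact ((PPaux.key hab x hax).symm.trans (PPaux.key hab y (hax.trans hxy)))
    by_cases hbx : π.SameCycle b x
    · have hab' : ¬ π.SameCycle b a := fun h => hab h.symm
      have h1 := PPaux.key hab' x hbx
      have h2 := PPaux.key hab' y (hbx.trans hxy)
      rw [Equiv.swap_comm b a] at h1 h2
      exact h1.symm.trans h2
    · have hfix : ∀ k : ℕ, ((π * Equiv.swap a b) ^ k) x = (π ^ k) x := by
        intro k
        induction k with
        | zero => rfl
        | succ n ihn =>
          have hzx : π.SameCycle x ((π ^ n) x) := ⟨n, by simp⟩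
          have hna : (π ^ n) x ≠ a := fun h => hax (h ▸ hzx.symm)
          have hnb : (π ^ n) x ≠ b := fun h => hbx (h ▸ hzx.symm)
          rw [pow_succ', Equiv.Perm.mul_apply, ihn, Equiv.Perm.mul_apply,
            Equiv.swap_apply_of_ne_of_ne hna hnb, pow_succ', Equiv.Perm.mul_apply]
      obtain ⟨k, hk⟩ := PPaux.sameCycle_of_pow hxy
      exact ⟨k, by rw [zpow_natCast, hfix k]; exact hk⟩
  · intro x y hxy
    rcases PPaux.sameCycle_swap_cases hxy with rfl | ⟨rfl, rfl⟩ | ⟨rfl, rfl⟩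
    · exact SameCycle.refl _ _
    · exact (PPaux.key hab _ (SameCycle.refl _ _)).symm
    · exact PPaux.key hab _ (SameCycle.refl _ _)

lemma PPaux.numCycles_le_card [Finite α] (σ : Equiv.Perm α) : numCycles σ ≤ Nat.card α :=
  Nat.card_le_card_of_surjective (Quotient.mk (cycleSetoid σ)) Quotient.mk_surjective

lemma PPaux.numCycles_one [Finite α] : numCycles (1 : Equiv.Perm α) = Nat.card α := by
  refine Nat.card_congr ⟨Quotient.lift id (fun a b h => Equiv.Perm.sameCycle_one.mp h),
    Quotient.mk _, fun q => Quotient.inductionOn q (fun x => rfl), fun x => rfl⟩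

/-- Elementary step: multiplying by a transposition and joining its pair. -/
lemma PPaux.claim1 [Finite α] [DecidableEq α] {W : Setoid α} {ρ : Equiv.Perm α}
    (hρW : cycleSetoid ρ ≤ W) (a b : α) :
    numCycles (ρ * Equiv.swap a b) + 2 * Nat.card (Quotient W) ≤
      2 * Nat.card (Quotient (W ⊔ cycleSetoid (Equiv.swap a b))) + numCycles ρ + 1 := by
  by_cases hWab : W a b
  · have hW : W ⊔ cycleSetoid (Equiv.swap a b) = W := by
      refine sup_eq_left.mpr ?_
      intro x y hxy
      rcases PPaux.sameCycle_swap_cases hxy with rfl | ⟨rfl, rfl⟩ | ⟨rfl, rfl⟩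
      · exact W.refl' x
      · exact hWab
      · exact W.symm' hWab
    rw [hW]
    have hρeq : (ρ * Equiv.swap a b) * Equiv.swap a b = ρ := by
      rw [mul_assoc, Equiv.swap_mul_self, mul_one]
    have h1 : cycleSetoid ρ ≤
        cycleSetoid (ρ * Equiv.swap a b) ⊔ cycleSetoid (Equiv.swap a b) := by
      conv_lhs => rw [← hρeq]
      exact PPaux.cycleSetoid_mul_le _ _
    have h2 := PPaux.card_mono h1
    have h3 := PPaux.card_le_card_sup_swap_add_one (cycleSetoid (ρ * Equiv.swap a b)) a b
    unfold numCycles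
    omega
  · have hab' : ¬ ρ.SameCycle a b := fun h => hWab (hρW h)
    have h1 := PPaux.card_mono (PPaux.sup_le_cycle_mul_swap hab')
    have h2 := PPaux.card_sup_swap_lt (s := cycleSetoid ρ) hab'
    have h3 := PPaux.card_le_card_sup_swap_add_one W a b
    unfold numCycles
    omega

/-- Coarsening one argument of a join: each merge loses at most one class. -/
lemma PPaux.stepB [Finite α] [DecidableEq α] (Vs Y : Setoid α) :
    ∀ N (X : Setoid α), Nat.card (Quotient X) ≤ N → X ≤ Y →
      Nat.card (Quotient (Vs ⊔ X)) + Nat.card (Quotient Y) ≤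
        Nat.card (Quotient (Vs ⊔ Y)) + Nat.card (Quotient X) := by
  intro N
  induction N with
  | zero =>
    intro X hX _
    have h0 : Nat.card (Quotient X) = 0 := Nat.le_zero.mp hX
    have hemp : IsEmpty α := by
      rcases Nat.card_eq_zero.mp h0 with h | h
      · exact ⟨fun x => h.elim (Quotient.mk X x)⟩
      · exact absurd h (not_infinite_iff_finite.mpr inferInstance)
    have e : ∀ s : Setoid α, Nat.card (Quotient s) = 0 := fun s =>
      Nat.card_eq_zero.mpr (Or.inl ⟨fun q => Quotient.inductionOn q (fun x => isEmptyElim x)⟩)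
    rw [e, e, e, e]
  | succ N ih =>
    intro X hX hXY
    by_cases h : Y ≤ X
    · rw [le_antisymm hXY h]
    · have h' : ∃ a b, Y a b ∧ ¬ X a b := by
        by_contra hc
        push_neg at hc
        exact h (fun x y hxy => hc x y hxy)
      obtain ⟨a, b, hYab, hXab⟩ := h'
      set X' := X ⊔ cycleSetoid (Equiv.swap a b) with hX'
      have hpairY : cycleSetoid (Equiv.swap a b) ≤ Y := by
        intro x y hxy
        rcases PPaux.sameCycle_swap_cases hxy with rfl | ⟨rfl, rfl⟩ | ⟨rfl, rfl⟩
        · exact Y.refl' x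
        · exact hYab
        · exact Y.symm' hYab
      have hX'Y : X' ≤ Y := sup_le hXY hpairY
      have hlt : Nat.card (Quotient X') < Nat.card (Quotient X) :=
        PPaux.card_sup_swap_lt hXab
      have h1 := ih X' (by omega) hX'Y
      have h2 : Nat.card (Quotient (Vs ⊔ X)) ≤ Nat.card (Quotient (Vs ⊔ X')) + 1 := by
        have he : Vs ⊔ X' = (Vs ⊔ X) ⊔ cycleSetoid (Equiv.swap a b) := by
          rw [hX', sup_assoc]
        rw [he]
        exact PPaux.card_le_card_sup_swap_add_one _ a b
      omega

lemma PPaux.numCycles_lt_of_ne_one [Finite α] {σ : Equiv.Perm α} (hσ : σ ≠ 1) :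
    numCycles σ < Nat.card α := by
  obtain ⟨a, ha⟩ : ∃ a, σ a ≠ a := by
    by_contra hc
    push_neg at hc
    exact hσ (Equiv.ext fun x => by rw [hc x, Equiv.Perm.one_apply])
  refine lt_of_le_of_ne (PPaux.numCycles_le_card σ) (fun heq => ?_)
  have heq' : Nat.card α ≤ Nat.card (Quotient (cycleSetoid σ)) := heq.symm.le
  have hbij := (Quotient.mk_surjective (s := cycleSetoid σ)).bijective_of_nat_card_le heq'
  have h1 : Quotient.mk (cycleSetoid σ) a = Quotient.mk (cycleSetoid σ) (σ a) :=
    Quotient.sound (⟨1, by simp⟩ : σ.SameCycle a (σ a))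
  exact ha (hbij.injective h1).symm

lemma PPaux.stepA [Finite α] [DecidableEq α] (V : Setoid α) (π : Equiv.Perm α)
    (hπV : cycleSetoid π ≤ V) :
    ∀ N (σ : Equiv.Perm α), Nat.card α - numCycles σ ≤ N →
      numCycles (π * σ) + 2 * Nat.card (Quotient V) + numCycles σ ≤
        Nat.card α + 2 * Nat.card (Quotient (V ⊔ cycleSetoid σ)) + numCycles π := by
  intro N
  induction N with
  | zero =>
    intro σ hN
    by_cases hσ : σ = 1
    · subst hσ
      have hle : cycleSetoid (1 : Equiv.Perm α) ≤ V := fun x y h =>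
        (Equiv.Perm.sameCycle_one.mp h) ▸ V.refl' x
      rw [mul_one, PPaux.numCycles_one, sup_eq_left.mpr hle]
      omega
    · have := PPaux.numCycles_lt_of_ne_one hσ
      omega
  | succ N ih =>
    intro σ hN
    by_cases hσ : σ = 1
    · subst hσ
      have hle : cycleSetoid (1 : Equiv.Perm α) ≤ V := fun x y h =>
        (Equiv.Perm.sameCycle_one.mp h) ▸ V.refl' x
      rw [mul_one, PPaux.numCycles_one, sup_eq_left.mpr hle]
      omega
    · obtain ⟨a, ha⟩ : ∃ a, σ a ≠ a := by
        by_contra hc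
        push_neg at hc
        exact hσ (Equiv.ext fun x => by rw [hc x, Equiv.Perm.one_apply])
      set τ := Equiv.swap a (σ a) with hτ
      set σ' := σ * τ with hσ'def
      have hfixpt : σ' (σ a) = σ a := by
        rw [hσ'def, Equiv.Perm.mul_apply, hτ, Equiv.swap_apply_right]
      have hnots : ¬ σ'.SameCycle a (σ a) := by
        intro h
        obtain ⟨i, hi⟩ := PPaux.sameCycle_of_pow h.symm
        have hfix : ∀ k : ℕ, (σ' ^ k) (σ a) = σ a := by
          intro k
          induction k with
          | zero => rfl
          | succ n ihn => rw [pow_succ', Equiv.Perm.mul_apply, ihn, hfixpt]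
        rw [hfix i] at hi
        exact ha hi
      have hστ : σ' * τ = σ := by
        rw [hσ'def, mul_assoc, hτ, Equiv.swap_mul_self, mul_one]
      have hτleσ : cycleSetoid τ ≤ cycleSetoid σ := by
        intro x y hxy
        rw [hτ] at hxy
        rcases PPaux.sameCycle_swap_cases hxy with h' | ⟨h1, h2⟩ | ⟨h1, h2⟩
        · exact h' ▸ Equiv.Perm.SameCycle.refl _ _
        · subst h1; subst h2; exact ⟨1, by simp⟩
        · subst h1; subst h2; exact Equiv.Perm.SameCycle.symm ⟨1, by simp⟩
      have hσ'leσ : cycleSetoid σ' ≤ cycleSetoid σ := by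
        have h1 := PPaux.cycleSetoid_mul_le σ τ
        exact le_trans (hσ'def ▸ h1) (sup_le le_rfl hτleσ)
      have hPeq : V ⊔ cycleSetoid σ = (V ⊔ cycleSetoid σ') ⊔ cycleSetoid τ := by
        rw [sup_assoc]
        congr 1
        refine le_antisymm ?_ (sup_le hσ'leσ hτleσ)
        have h1 := PPaux.cycleSetoid_mul_le σ' τ
        rwa [hστ] at h1
      have hcount : numCycles σ + 1 ≤ numCycles σ' := by
        have h1 := PPaux.card_mono (PPaux.sup_le_cycle_mul_swap hnots)
        rw [show σ' * Equiv.swap a (σ a) = σ from hστ] at h1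
        have h2 := PPaux.card_sup_swap_lt (s := cycleSetoid σ')
          (show ¬ (cycleSetoid σ') a (σ a) from hnots)
        unfold numCycles
        rw [show Equiv.swap a (σ a) = τ from rfl] at h1 h2
        omega
      have hmeas : Nat.card α - numCycles σ' ≤ N := by
        have := PPaux.numCycles_le_card σ'
        omega
      have hIH := ih σ' hmeas
      have hC1 := PPaux.claim1 (W := V ⊔ cycleSetoid σ') (ρ := π * σ')
        (le_trans (PPaux.cycleSetoid_mul_le π σ')
          (sup_le (le_trans hπV le_sup_left) le_sup_right)) a (σ a)
      have hmul : (π * σ') * Equiv.swap a (σ a) = π * σ := by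
        rw [mul_assoc, show σ' * Equiv.swap a (σ a) = σ from hστ]
      rw [hmul, show Equiv.swap a (σ a) = τ from rfl, ← hPeq] at hC1
      omega

end Aux

/-- Triangle inequality for partitioned permutations: if `(V,π)` and `(U,σ)`
are partitioned permutations on `{1,…,n}` (each cycle of `π` is contained in a
block of `V`, and likewise for `σ` and `U`), then
`|(V∨U, πσ)| ≤ |(V,π)| + |(U,σ)|` where `|(V,π)| = 2|V| − |π|`. -/
theorem partitionedPerm_triangle {n : ℕ} (V U : Setoid (Fin n))
    (π σ : Equiv.Perm (Fin n))
    (hπV : cycleSetoid π ≤ V) (hσU : cycleSetoid σ ≤ U) :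
    2 * setoidLen (V ⊔ U) - permLenZ (π * σ) ≤
      (2 * setoidLen V - permLenZ π) + (2 * setoidLen U - permLenZ σ) := by
  classical
  have hA := PPaux.stepA V π hπV (Nat.card (Fin n)) σ (Nat.sub_le _ _)
  have hB := PPaux.stepB V U (Nat.card (Quotient (cycleSetoid σ))) (cycleSetoid σ)
    le_rfl hσU
  have hn : Nat.card (Fin n) = n := by simp
  simp only [setoidLen, permLenZ, numCycles] at hA hB ⊢
  rw [hn] at hA ⊢
  omega
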